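/- Let K be a field and M an A × B matrix over K, with Π a partition of B into n classes, and k a positive integer. If there exists a partial transversal P of Π with |P| = k such that M[A, P] has rank k, then for every subset Θ of Π, the rank of M[A, ⋃Θ] is at least k + |Θ| − n. -/

import Mathlib

open Submodule Module

/-- Rank of a column-selected submatrix equals the finrank of the span of the
selected columns. -/
lemma rank_submatrix_cols {K A B ι : Type*} [Field K] [Fintype A] [Fintype ι]
    (M : Matrix A B K) (f : ι → B) :
    (M.submatrix id f).rank = finrank K (span K (M.transpose '' Set.range f)) := by
  have hs : Set.range (M.submatrix id f).transpose = M.transpose '' Set.range f := by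
    ext v
    constructor
    · rintro ⟨i, rfl⟩; exact ⟨f i, ⟨i, rfl⟩, rfl⟩
    · rintro ⟨j, ⟨i, rfl⟩, rfl⟩; exact ⟨i, rfl⟩
  rw [Matrix.rank_eq_finrank_span_cols]
  change finrank K (span K (Set.range (M.submatrix id f).transpose)) = _
  rw [hs]

theorem stmt_6 {K : Type*} [Field K] {A B : Type*} [Fintype A] [Fintype B]
    [DecidableEq B] {n k : ℕ} (M : Matrix A B K) (b : B → Fin n)
    (P : Finset B) (hcard : P.card = k) (htrans : Set.InjOn b ↑P)
    (hrank : (M.submatrix id (fun j : {j : B // j ∈ P} => (j : B))).rank = k) :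
    ∀ Θ : Finset (Fin n),
      (k : ℤ) + Θ.card - n ≤
        ((M.submatrix id (fun j : {j : B // b j ∈ Θ} => (j : B))).rank : ℤ) := by
  intro Θ
  classical
  set P₁ : Finset B := P.filter (fun j => b j ∈ Θ) with hP₁
  set P₂ : Finset B := P.filter (fun j => b j ∉ Θ) with hP₂
  -- spans
  set W : Submodule K (A → K) := span K (M.transpose '' ↑P₁)
  set U : Submodule K (A → K) := span K (M.transpose '' ↑P₂)
  set V : Submodule K (A → K) := span K (M.transpose '' ↑P)
  have hVk : finrank K V = k := by
    rw [rank_submatrix_cols] at hrank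
    rwa [show Set.range (fun j : {j : B // j ∈ P} => (j : B)) = ↑P by
      ext x; simp] at hrank
  have hVle : V ≤ W ⊔ U := by
    apply span_le.2
    rintro v ⟨x, hx, rfl⟩
    by_cases hbx : b x ∈ Θ
    · exact le_sup_left (α := Submodule K (A → K)) <|
        subset_span ⟨x, by simp only [hP₁, Finset.coe_filter, Set.mem_setOf_eq]; exact ⟨hx, hbx⟩, rfl⟩
    · exact le_sup_right (α := Submodule K (A → K)) <|
        subset_span ⟨x, by simp only [hP₂, Finset.coe_filter, Set.mem_setOf_eq]; exact ⟨hx, hbx⟩, rfl⟩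
  have hU : finrank K U ≤ n - Θ.card := by
    have h1 : finrank K U ≤ P₂.card := by
      have h0 : U = span K ↑(P₂.image M.transpose) := (congrArg (span K) Finset.coe_image).symm
      rw [h0]
      exact le_trans (finrank_span_finset_le_card _) Finset.card_image_le
    refine h1.trans ?_
    have h2 : P₂.card ≤ Θᶜ.card := by
      apply Finset.card_le_card_of_injOn b
      · intro x hx
        simp only [hP₂, Finset.coe_filter, Set.mem_setOf_eq] at hx
        simpa using hx.2
      · intro x hx y hy hxy
        simp only [hP₂, Finset.coe_filter, Set.mem_setOf_eq] at hx hy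
        exact htrans hx.1 hy.1 hxy
    rw [Finset.card_compl, Fintype.card_fin] at h2
    exact h2
  have hWlow : k ≤ finrank K W + (n - Θ.card) := by
    calc k = finrank K V := hVk.symm
    _ ≤ finrank K ↥(W ⊔ U) := Submodule.finrank_mono hVle
    _ ≤ finrank K W + finrank K U := Submodule.finrank_add_le_finrank_add_finrank W U
    _ ≤ finrank K W + (n - Θ.card) := by omega
  have hmono : finrank K W ≤ (M.submatrix id (fun j : {j : B // b j ∈ Θ} => (j : B))).rank := by
    rw [rank_submatrix_cols]
    apply Submodule.finrank_mono
    apply span_mono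
    apply Set.image_mono
    intro x hx
    simp only [hP₁, Finset.coe_filter, Set.mem_setOf_eq] at hx
    exact ⟨⟨x, hx.2⟩, rfl⟩
  have hΘn : Θ.card ≤ n := by simpa using Finset.card_le_card (Finset.subset_univ Θ)
  omega
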